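/- For n ≥ 1 and each integer i with 1 ≤ i ≤ ⌊n/2⌋ (with i ≤ n/2 − 1 when n is even), the vector (0,…,0 [i−1 zeros], n−2i, −1,…,−1 [n−2i entries], 0,…,0 [2i zeros], −1,…,−1 [n−2i entries], n−2i, 0,…,0 [i−1 zeros]) is an eigenvector of M(BP_n) with eigenvalue n−i. -/

import Mathlib

/-- The `n × n` diagonal matrix `A_n` with `(i,i)` entry `n - i` (for `1 ≤ i ≤ n`,
here `0`-indexed: entry `n - 1 - j`). -/
def An (n : ℕ) : Matrix (Fin n) (Fin n) ℝ :=
  Matrix.diagonal fun j => (n : ℝ) - (j : ℕ) - 1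

/-- The `n × n` diagonal matrix `C_n` with `(i,i)` entry `i - 1`. -/
def Cn (n : ℕ) : Matrix (Fin n) (Fin n) ℝ :=
  Matrix.diagonal fun j => ((j : ℕ) : ℝ)

/-- The `n × n` upper triangular all-ones matrix `D_n`. -/
def Dn (n : ℕ) : Matrix (Fin n) (Fin n) ℝ :=
  Matrix.of fun j k => if j ≤ k then 1 else 0

/-- The `2n × 2n` block matrix `M(BP_n) = [[A_n, D_nᵀ], [D_n, C_n]]`. -/
def Mbp (n : ℕ) : Matrix (Fin n ⊕ Fin n) (Fin n ⊕ Fin n) ℝ :=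
  Matrix.fromBlocks (An n) (Dn n).transpose (Dn n) (Cn n)

/-- The vector
`(0,…,0 [i-1 zeros], n-2i, -1,…,-1 [n-2i entries], 0,…,0 [2i zeros],
-1,…,-1 [n-2i entries], n-2i, 0,…,0 [i-1 zeros])` of length `2n`,
described positionally (0-indexed): in the first block, positions `< i-1` are
`0`, position `i-1` is `n-2i`, positions `i,…,n-i-1` are `-1`, and positions
`≥ n-i` are `0`; the second block is the mirror image. -/
def v9 (n i : ℕ) : Fin n ⊕ Fin n → ℝ :=
  Sum.elim
    (fun p => if (p : ℕ) < i - 1 then 0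
      else if (p : ℕ) = i - 1 then (n : ℝ) - 2 * i
      else if (p : ℕ) < n - i then -1 else 0)
    (fun q => if (q : ℕ) < i then 0
      else if (q : ℕ) < n - i then -1
      else if (q : ℕ) = n - i then (n : ℝ) - 2 * i else 0)

noncomputable def f1 (n i : ℕ) (m : ℕ) : ℝ :=
  if m < i - 1 then 0 else if m = i - 1 then (n : ℝ) - 2 * i
  else if m < n - i then -1 else 0

noncomputable def f2 (n i : ℕ) (m : ℕ) : ℝ :=
  if m < i then 0 else if m < n - i then -1
  else if m = n - i then (n : ℝ) - 2 * i else 0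

lemma cast_sub_ni (n i : ℕ) (h : i ≤ n) : ((n - i : ℕ) : ℝ) = (n : ℝ) - i := by
  push_cast [Nat.cast_sub h]; ring

lemma sum_f2 (n i : ℕ) (hi1 : 1 ≤ i) (hi2 : 2 * i < n) (t : ℕ) (ht : t ≤ n) :
    ∑ m ∈ Finset.range t, f2 n i m =
      if t ≤ i then 0 else if t ≤ n - i then (i : ℝ) - t else 0 := by
  induction t with
  | zero => simp
  | succ t ih =>
    rw [Finset.sum_range_succ, ih (by omega)]
    unfold f2
    split_ifs <;> try (exfalso; omega)
    all_goals
      first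
      | ring1
      | (push_cast; ring1)
      | ((have h : t = i := by omega); subst h; push_cast; ring1)
      | ((have h0 : t = n - i := by omega); subst h0;
         rw [cast_sub_ni n i (by omega)]; ring1)

lemma sum_f1 (n i : ℕ) (hi1 : 1 ≤ i) (hi2 : 2 * i < n) (t : ℕ) (ht : t ≤ n) :
    ∑ m ∈ Finset.range t, f1 n i m =
      if t < i then 0 else if t ≤ n - i then ((n : ℝ) - 2 * i) - (t - i) else 0 := by
  induction t with
  | zero => rw [Finset.sum_range_zero, if_pos (by omega : 0 < i)]
  | succ t ih =>
    rw [Finset.sum_range_succ, ih (by omega)]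
    unfold f1
    split_ifs <;> try (exfalso; omega)
    all_goals
      first
      | ring1
      | (push_cast; ring1)
      | ((have h : t = i - 1 := by omega); subst h;
         (have h2 : i - 1 + 1 = i := by omega); rw [h2]; ring1)
      | ((have h0 : t = n - i := by omega); subst h0;
         rw [cast_sub_ni n i (by omega)]; ring1)

lemma sum_ite_le' (f : ℕ → ℝ) (n t : ℕ) (h : t < n) :
    ∑ k : Fin n, (if (k : ℕ) ≤ t then f (k : ℕ) else 0)
      = ∑ m ∈ Finset.range (t + 1), f m := by
  rw [Fin.sum_univ_eq_sum_range (fun m => if m ≤ t then f m else 0)]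
  rw [← Finset.sum_range_add_sum_Ico _ (show t + 1 ≤ n by omega)]
  rw [Finset.sum_ite_of_true (by intro m hm; simp at hm; omega),
    Finset.sum_ite_of_false (by intro m hm; simp at hm; omega)]
  simp

lemma sum_ite_ge' (f : ℕ → ℝ) (n t : ℕ) (h : t ≤ n) :
    ∑ k : Fin n, (if t ≤ (k : ℕ) then f (k : ℕ) else 0)
      = ∑ m ∈ Finset.range n, f m - ∑ m ∈ Finset.range t, f m := by
  rw [Fin.sum_univ_eq_sum_range (fun m => if t ≤ m then f m else 0)]
  rw [← Finset.sum_range_add_sum_Ico _ h]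
  rw [Finset.sum_ite_of_false (by intro m hm; simp at hm; omega),
    Finset.sum_ite_of_true (by intro m hm; simp at hm; omega)]
  rw [← Finset.sum_range_add_sum_Ico f h]
  simp

/-- For `n ≥ 1` and each integer `i` with `1 ≤ i ≤ ⌊n/2⌋`
(and moreover `i ≤ n/2 - 1` when `n` is even; equivalently `1 ≤ i` and
`2i < n`), the vector `v9 n i` is an eigenvector of `M(BP_n)` with eigenvalue
`n - i`. -/
theorem v9_eigenvector_Mbp (n : ℕ) (hn : 1 ≤ n) (i : ℕ) (hi1 : 1 ≤ i)
    (hi2 : 2 * i < n) :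
    v9 n i ≠ 0 ∧ (Mbp n).mulVec (v9 n i) = ((n : ℝ) - i) • v9 n i := by
  have hv : v9 n i
      = Sum.elim (fun p : Fin n => f1 n i (p : ℕ)) (fun q : Fin n => f2 n i (q : ℕ)) := rfl
  have hcast : ((2 * i : ℕ) : ℝ) < n := by exact_mod_cast hi2
  push_cast at hcast
  constructor
  · intro h
    have h1 : v9 n i (Sum.inl ⟨i - 1, by omega⟩) = 0 := by rw [h]; rfl
    rw [hv] at h1
    simp only [Sum.elim_inl, f1] at h1
    rw [if_neg (lt_irrefl _), if_pos trivial] at h1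
    linarith
  · rw [hv, Mbp, Matrix.fromBlocks_mulVec]
    funext x
    cases x with
    | inl p =>
      have hp := p.isLt
      simp only [Sum.elim_inl, Sum.elim_comp_inl, Sum.elim_comp_inr, Pi.add_apply, Pi.smul_apply, smul_eq_mul]
      rw [An, Matrix.mulVec_diagonal]
      have hD : (Dn n).transpose.mulVec (fun q : Fin n => f2 n i (q : ℕ)) p
          = ∑ m ∈ Finset.range ((p : ℕ) + 1), f2 n i m := by
        rw [← sum_ite_le' (f2 n i) n (p : ℕ) hp]
        simp only [Matrix.mulVec, dotProduct, Matrix.transpose_apply, Dn,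
          Matrix.of_apply, Fin.le_def, ite_mul, one_mul, zero_mul]
      rw [hD, sum_f2 n i hi1 hi2 ((p : ℕ) + 1) (by omega)]
      unfold f1
      split_ifs <;> try (exfalso; omega)
      all_goals
        first
        | ring1
        | (push_cast; ring1)
        | ((have hc : (((p : ℕ)) : ℝ) = (i : ℝ) - 1 := by
             have h' : (p : ℕ) = i - 1 := by omega
             rw [h', cast_sub_ni i 1 hi1]; push_cast; ring)
           rw [hc]; push_cast; ring1)
        | ((have hc : (((p : ℕ)) : ℝ) = (n : ℝ) - i := by
             have h' : (p : ℕ) = n - i := by omega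
             rw [h', cast_sub_ni n i (by omega)])
           rw [hc]; push_cast; ring1)
    | inr q =>
      have hq := q.isLt
      simp only [Sum.elim_inr, Sum.elim_comp_inl, Sum.elim_comp_inr, Pi.add_apply, Pi.smul_apply, smul_eq_mul]
      rw [Cn, Matrix.mulVec_diagonal]
      have hD : (Dn n).mulVec (fun p : Fin n => f1 n i (p : ℕ)) q
          = ∑ m ∈ Finset.range n, f1 n i m - ∑ m ∈ Finset.range (q : ℕ), f1 n i m := by
        rw [← sum_ite_ge' (f1 n i) n (q : ℕ) (by omega)]
        simp only [Matrix.mulVec, dotProduct, Dn,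
          Matrix.of_apply, Fin.le_def, ite_mul, one_mul, zero_mul]
      rw [hD, sum_f1 n i hi1 hi2 n (le_refl n),
        sum_f1 n i hi1 hi2 (q : ℕ) (by omega)]
      rw [if_neg (by omega : ¬ n < i), if_neg (by omega : ¬ n ≤ n - i)]
      unfold f2
      split_ifs <;> try (exfalso; omega)
      all_goals
        first
        | ring1
        | (push_cast; ring1)
        | ((have hc : (((q : ℕ)) : ℝ) = (n : ℝ) - i := by
             have h' : (q : ℕ) = n - i := by omega
             rw [h', cast_sub_ni n i (by omega)])
           rw [hc]; push_cast; ring1)
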